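/- Let X ⊂ R^d be a finite dataset of size n and f : R^{d-1} → R a function. Then the infimum over m ∈ R^d, positive definite Σ_hat ∈ M_{d-1}(R) and σ > 0 of H^×(X‖N(m, Σ_hat, σ, f)) equals (d/2) ln(2πe) + (1/2) ln det(cov(X_hat)) + (1/2) ln((1/n) Σ_{x∈X} (x_d - f(x_hat) - m_d)^2), where m_d is the empirical mean of {x_d - f(x_hat) : x ∈ X}, and cov(X_hat) is the empirical covariance of the projected data X_hat (assumed positive definite, with the final sum positive). -/

import Mathlib

open Real Matrix

/-- Multivariate Gaussian density with mean `m` and covariance `C`. -/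
noncomputable def gaussDensity {ι : Type*} [Fintype ι] [DecidableEq ι] (m : ι → ℝ)
    (C : Matrix ι ι ℝ) (x : ι → ℝ) : ℝ :=
  (2 * π) ^ (-(Fintype.card ι : ℝ) / 2) * C.det ^ (-(1 : ℝ) / 2) *
    Real.exp (-(1 / 2) * ((x - m) ⬝ᵥ (C⁻¹ *ᵥ (x - m))))

/-- One-dimensional Gaussian density with mean `m` and variance `σ`. -/
noncomputable def gauss1 (m σ x : ℝ) : ℝ :=
  (2 * π * σ) ^ (-(1 : ℝ) / 2) * Real.exp (-(x - m) ^ 2 / (2 * σ))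

/-- Empirical cross-entropy of a finite dataset w.r.t. a density `g`. -/
noncomputable def crossEntropy {α : Type*} (n : ℕ) (X : Fin n → α) (g : α → ℝ) : ℝ :=
  -((1 / n : ℝ) * ∑ l, Real.log (g (X l)))

/-- Empirical cross-entropy of `X ⊂ ℝ^{d+1}` w.r.t. the `f`-adapted Gaussian
`N(m, Σ̂, σ, f)`. -/
noncomputable def fAdaptedCE (d n : ℕ) (f : (Fin d → ℝ) → ℝ)
    (X : Fin n → (Fin (d + 1) → ℝ)) (m : Fin (d + 1) → ℝ)
    (Shat : Matrix (Fin d) (Fin d) ℝ) (σ : ℝ) : ℝ :=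
  crossEntropy n X (fun x =>
    gaussDensity (fun i : Fin d => m (Fin.castSucc i)) Shat
        (fun i : Fin d => x (Fin.castSucc i)) *
      gauss1 (m (Fin.last d)) σ
        (x (Fin.last d) - f (fun i : Fin d => x (Fin.castSucc i))))

lemma lem_log_ineq {s σ : ℝ} (hs : 0 < s) (hσ : 0 < σ) :
    Real.log s + 1 ≤ Real.log σ + s / σ := by
  have h := Real.log_le_sub_one_of_pos (show 0 < s / σ from div_pos hs hσ)
  rw [Real.log_div hs.ne' hσ.ne'] at h
  linarith

lemma lem_trace_eig {d : ℕ} {A : Matrix (Fin d) (Fin d) ℝ} (hA : A.IsHermitian) :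
    A.trace = ∑ i, hA.eigenvalues i := by
  rw [hA.trace_eq_sum_eigenvalues]
  simp

lemma lem_dot_trace {d : ℕ} (A : Matrix (Fin d) (Fin d) ℝ) (v : Fin d → ℝ) :
    v ⬝ᵥ (A *ᵥ v) = (A * vecMulVec v v).trace := by
  simp only [dotProduct, mulVec, vecMulVec, trace, Matrix.mul_apply, diag, Matrix.of_apply,
    Finset.mul_sum, Finset.sum_mul]
  congr 1; ext i; congr 1; ext j; ring

open scoped MatrixOrder in
lemma lem_logdet {d : ℕ} {S C : Matrix (Fin d) (Fin d) ℝ} (hS : S.PosDef) (hC : C.PosDef) :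
    Real.log C.det + d ≤ Real.log S.det + (S⁻¹ * C).trace := by
  set T := CFC.sqrt C with hT
  have hTT : T * T = C := CFC.sqrt_mul_sqrt_self C hC.posSemidef.nonneg
  have hTh : T.IsHermitian := (CFC.sqrt_nonneg C).posSemidef.isHermitian
  have hSi : (S⁻¹).PosDef := hS.inv
  set M := T * S⁻¹ * T with hM
  have hMps : M.PosSemidef := by
    have := hSi.posSemidef.mul_mul_conjTranspose_same T
    rwa [hTh.eq] at this
  have hdetC : 0 < C.det := hC.det_pos
  have hdetS : 0 < S.det := hS.det_pos
  have hdTT : T.det * T.det = C.det := by rw [← Matrix.det_mul, hTT]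
  have hdetM : M.det = C.det * S.det⁻¹ := by
    rw [hM, Matrix.det_mul, Matrix.det_mul, Matrix.det_nonsing_inv, Ring.inverse_eq_inv']
    linear_combination S.det⁻¹ * hdTT
  have hdetMpos : 0 < M.det := by rw [hdetM]; positivity
  have hMh : M.IsHermitian := hMps.isHermitian
  have heignn : ∀ i, 0 ≤ hMh.eigenvalues i := fun i => hMps.eigenvalues_nonneg i
  have hprod : ∏ i, hMh.eigenvalues i = M.det := by
    have := hMh.det_eq_prod_eigenvalues
    simp at this
    linarith [this]
  have heigpos : ∀ i, 0 < hMh.eigenvalues i := by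
    intro i
    rcases lt_or_eq_of_le (heignn i) with h | h
    · exact h
    · exfalso
      have : ∏ j, hMh.eigenvalues j = 0 := Finset.prod_eq_zero (Finset.mem_univ i) h.symm
      rw [hprod] at this; linarith
  have htr : M.trace = (S⁻¹ * C).trace := by
    rw [hM, trace_mul_cycle, hTT, trace_mul_comm]
  have hsum : Real.log M.det + d ≤ M.trace := by
    rw [lem_trace_eig hMh, ← hprod, Real.log_prod (fun i _ => (heigpos i).ne')]
    have hle : ∀ i ∈ Finset.univ, Real.log (hMh.eigenvalues i) + 1 ≤ hMh.eigenvalues i :=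
      fun i _ => by linarith [Real.log_le_sub_one_of_pos (heigpos i)]
    calc (∑ i, Real.log (hMh.eigenvalues i)) + d
        = ∑ i : Fin d, (Real.log (hMh.eigenvalues i) + 1) := by
          rw [Finset.sum_add_distrib]; simp
      _ ≤ ∑ i, hMh.eigenvalues i := Finset.sum_le_sum hle
  have hlogM : Real.log M.det = Real.log C.det - Real.log S.det := by
    rw [hdetM, Real.log_mul hdetC.ne' (by positivity), Real.log_inv]; ring
  rw [htr, hlogM] at hsum
  linarith

lemma lem_scalar_bias {n : ℕ} (a : Fin n → ℝ) (abar t : ℝ)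
    (h : abar = (1 / n : ℝ) * ∑ l, a l) (hn : 0 < n) :
    ∑ l, (a l - abar) ^ 2 ≤ ∑ l, (a l - t) ^ 2 := by
  have hn' : (n : ℝ) ≠ 0 := Nat.cast_ne_zero.mpr hn.ne'
  have hsum : ∑ l, (a l - abar) = 0 := by
    rw [Finset.sum_sub_distrib, Finset.sum_const, Finset.card_univ, Fintype.card_fin, h,
      nsmul_eq_mul]
    field_simp; ring
  have key : ∀ l ∈ Finset.univ, (a l - t) ^ 2 =
      (a l - abar) ^ 2 + 2 * (a l - abar) * (abar - t) + (abar - t) ^ 2 := fun l _ => by ring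
  rw [Finset.sum_congr rfl key, Finset.sum_add_distrib, Finset.sum_add_distrib]
  have h1 : ∑ l, 2 * (a l - abar) * (abar - t) = 0 := by
    rw [show (fun l => 2 * (a l - abar) * (abar - t)) = fun l => (a l - abar) * (2 * (abar - t))
      from funext fun l => by ring]
    rw [← Finset.sum_mul, hsum, zero_mul]
  rw [h1]
  have h2 : (0:ℝ) ≤ ∑ _l : Fin n, (abar - t) ^ 2 := by positivity
  linarith

lemma dot_sum_left {n d : ℕ} (u : Fin n → Fin d → ℝ) (y : Fin d → ℝ) :
    ∑ l, (u l ⬝ᵥ y) = (∑ l, u l) ⬝ᵥ y := by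
  simp only [dotProduct, Finset.sum_apply, Finset.sum_mul]
  rw [Finset.sum_comm]

lemma dot_sum_right {n d : ℕ} (y : Fin d → ℝ) (u : Fin n → Fin d → ℝ) :
    ∑ l, (y ⬝ᵥ u l) = y ⬝ᵥ (∑ l, u l) := by
  simp only [dotProduct, Finset.sum_apply, Finset.mul_sum]
  rw [Finset.sum_comm]

lemma lem_vec_bias {d n : ℕ} (hn : 0 < n) {A : Matrix (Fin d) (Fin d) ℝ} (hA : A.PosSemidef)
    (w : Fin n → Fin d → ℝ) (wbar t : Fin d → ℝ) (h : wbar = (1 / n : ℝ) • ∑ l, w l) :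
    ∑ l, ((w l - wbar) ⬝ᵥ (A *ᵥ (w l - wbar))) ≤ ∑ l, ((w l - t) ⬝ᵥ (A *ᵥ (w l - t))) := by
  have hn' : (n : ℝ) ≠ 0 := Nat.cast_ne_zero.mpr hn.ne'
  have hsum : ∑ l, (w l - wbar) = 0 := by
    rw [Finset.sum_sub_distrib, Finset.sum_const, Finset.card_univ, Fintype.card_fin,
      ← Nat.cast_smul_eq_nsmul ℝ, h, smul_smul]
    rw [show (n : ℝ) * (1 / n) = 1 by field_simp, one_smul, sub_self]
  have key : ∀ l ∈ Finset.univ, (w l - t) ⬝ᵥ (A *ᵥ (w l - t)) =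
      (w l - wbar) ⬝ᵥ (A *ᵥ (w l - wbar)) + ((w l - wbar) ⬝ᵥ (A *ᵥ (wbar - t)) +
        ((wbar - t) ⬝ᵥ (A *ᵥ (w l - wbar)) + (wbar - t) ⬝ᵥ (A *ᵥ (wbar - t)))) := by
    intro l _
    have hwt : w l - t = (w l - wbar) + (wbar - t) := by abel
    rw [hwt]
    simp only [Matrix.mulVec_add, dotProduct_add, add_dotProduct]
    ring
  rw [Finset.sum_congr rfl key, Finset.sum_add_distrib, Finset.sum_add_distrib,
    Finset.sum_add_distrib, dot_sum_left, dot_sum_right, hsum]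
  have hAsum : ∑ l, A *ᵥ (w l - wbar) = (0 : Fin d → ℝ) := by
    have h5 : ∑ l, A *ᵥ (w l - wbar) = A *ᵥ (∑ l, (w l - wbar)) := by
      simp only [← Matrix.mulVecLin_apply]
      exact (map_sum (A.mulVecLin) _ _).symm
    rw [h5, hsum, Matrix.mulVec_zero]
  rw [hAsum, zero_dotProduct, dotProduct_zero]
  have h2 : (0:ℝ) ≤ (wbar - t) ⬝ᵥ (A *ᵥ (wbar - t)) := by
    have := hA.dotProduct_mulVec_nonneg (wbar - t)
    rwa [star_trivial] at this
  have h4 : (0:ℝ) ≤ ∑ _l : Fin n, (wbar - t) ⬝ᵥ (A *ᵥ (wbar - t)) :=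
    Finset.sum_nonneg fun _ _ => h2
  linarith

lemma lem_sum_q {d n : ℕ} (hn : 0 < n) (A : Matrix (Fin d) (Fin d) ℝ)
    (w : Fin n → Fin d → ℝ) (wbar : Fin d → ℝ) (cov : Matrix (Fin d) (Fin d) ℝ)
    (hcov : cov = (1 / n : ℝ) • ∑ l, Matrix.vecMulVec (w l - wbar) (w l - wbar)) :
    ∑ l, ((w l - wbar) ⬝ᵥ (A *ᵥ (w l - wbar))) = n * (A * cov).trace := by
  have hn' : (n : ℝ) ≠ 0 := Nat.cast_ne_zero.mpr hn.ne'
  have hsumcov : (n : ℝ) • cov = ∑ l, Matrix.vecMulVec (w l - wbar) (w l - wbar) := by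
    rw [hcov, smul_smul, show (n : ℝ) * (1 / n) = 1 by field_simp, one_smul]
  calc ∑ l, ((w l - wbar) ⬝ᵥ (A *ᵥ (w l - wbar)))
      = ∑ l, (A * Matrix.vecMulVec (w l - wbar) (w l - wbar)).trace := by
        exact Finset.sum_congr rfl fun l _ => lem_dot_trace A _
    _ = (A * ((n : ℝ) • cov)).trace := by
        rw [hsumcov, Matrix.mul_sum, Matrix.trace_sum]
    _ = n * (A * cov).trace := by
        rw [Matrix.mul_smul, Matrix.trace_smul]; simp

lemma lem_CE_formula (d n : ℕ) (hn : 0 < n) (f : (Fin d → ℝ) → ℝ)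
    (X : Fin n → (Fin (d + 1) → ℝ)) (m : Fin (d + 1) → ℝ)
    (Shat : Matrix (Fin d) (Fin d) ℝ) (σ : ℝ) (hS : Shat.PosDef) (hσ : 0 < σ) :
    fAdaptedCE d n f X m Shat σ =
      (d / 2 : ℝ) * Real.log (2 * π) + (1 / 2) * Real.log Shat.det +
      (1 / (2 * n) : ℝ) * ∑ l, (((fun i => X l (Fin.castSucc i)) - fun i => m (Fin.castSucc i)) ⬝ᵥ
          (Shat⁻¹ *ᵥ ((fun i => X l (Fin.castSucc i)) - fun i => m (Fin.castSucc i)))) +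
      (1 / 2) * Real.log (2 * π * σ) +
      (1 / (2 * σ * n)) * ∑ l,
        (X l (Fin.last d) - f (fun i => X l (Fin.castSucc i)) - m (Fin.last d)) ^ 2 := by
  have hn' : (n : ℝ) ≠ 0 := Nat.cast_ne_zero.mpr hn.ne'
  have h2π : (0:ℝ) < 2 * π := by positivity
  have hdet : 0 < Shat.det := hS.det_pos
  have h2πσ : (0:ℝ) < 2 * π * σ := by positivity
  set q : Fin n → ℝ := fun l =>
    (((fun i => X l (Fin.castSucc i)) - fun i => m (Fin.castSucc i)) ⬝ᵥ
      (Shat⁻¹ *ᵥ ((fun i => X l (Fin.castSucc i)) - fun i => m (Fin.castSucc i)))) with hq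
  set z : Fin n → ℝ := fun l =>
    X l (Fin.last d) - f (fun i => X l (Fin.castSucc i)) - m (Fin.last d) with hz
  have hlog : ∀ l ∈ Finset.univ, Real.log
      ((gaussDensity (fun i : Fin d => m (Fin.castSucc i)) Shat
          (fun i : Fin d => X l (Fin.castSucc i))) *
        (gauss1 (m (Fin.last d)) σ
          (X l (Fin.last d) - f (fun i : Fin d => X l (Fin.castSucc i))))) =
      -((d:ℝ)/2) * Real.log (2*π) - (1/2) * Real.log Shat.det - (1/2) * q l
        - (1/2) * Real.log (2*π*σ) - (z l)^2 / (2*σ) := by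
    intro l _
    unfold gaussDensity gauss1
    rw [Real.log_mul (by positivity) (by positivity),
      Real.log_mul (by positivity) (by positivity),
      Real.log_mul (by positivity) (by positivity),
      Real.log_mul (by positivity) (by positivity),
      Real.log_exp, Real.log_exp, Real.log_rpow h2π, Real.log_rpow hdet, Real.log_rpow h2πσ]
    simp only [Fintype.card_fin, hq, hz]
    ring
  unfold fAdaptedCE crossEntropy
  rw [Finset.sum_congr rfl hlog]
  rw [Finset.sum_sub_distrib, Finset.sum_sub_distrib, Finset.sum_sub_distrib,
    Finset.sum_sub_distrib, Finset.sum_const, Finset.sum_const, Finset.sum_const,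
    Finset.card_univ, Fintype.card_fin, nsmul_eq_mul, nsmul_eq_mul, nsmul_eq_mul,
    ← Finset.mul_sum]
  have hsz : ∑ l, (z l)^2 / (2*σ) = (∑ l, (z l)^2) / (2*σ) := by
    rw [Finset.sum_div]
  rw [hsz]
  field_simp
  ring

/-- the infimum over parameters `(m, Σ̂, σ)` of the cross-entropy of `X`
w.r.t. the `f`-adapted Gaussians is attained and equals
`(d/2) ln(2πe) + (1/2) ln det cov(X̂) + (1/2) ln((1/n) Σ (x_d - f(x̂) - m_d)²)`. -/
theorem fAdapted_cross_entropy_inf (d n : ℕ) (hn : 0 < n) (f : (Fin d → ℝ) → ℝ)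
    (X : Fin n → (Fin (d + 1) → ℝ))
    (Xhat : Fin n → (Fin d → ℝ)) (hXhat : ∀ l, Xhat l = fun i => X l (Fin.castSucc i))
    (res : Fin n → ℝ) (hres : ∀ l, res l = X l (Fin.last d) - f (Xhat l))
    (mhat : Fin d → ℝ) (hmhat : mhat = (1 / n : ℝ) • ∑ l, Xhat l)
    (md : ℝ) (hmd : md = (1 / n : ℝ) * ∑ l, res l)
    (cov : Matrix (Fin d) (Fin d) ℝ)
    (hcov : cov = (1 / n : ℝ) • ∑ l, Matrix.vecMulVec (Xhat l - mhat) (Xhat l - mhat))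
    (hcovPD : cov.PosDef)
    (hvar : 0 < (1 / n : ℝ) * ∑ l, (res l - md) ^ 2) :
    (∀ (m : Fin (d + 1) → ℝ) (Shat : Matrix (Fin d) (Fin d) ℝ) (σ : ℝ),
        Shat.PosDef → 0 < σ →
        ((d + 1 : ℝ) / 2) * Real.log (2 * π * Real.exp 1) +
            (1 / 2) * Real.log cov.det +
            (1 / 2) * Real.log ((1 / n : ℝ) * ∑ l, (res l - md) ^ 2) ≤
          fAdaptedCE d n f X m Shat σ) ∧
      ∃ (m : Fin (d + 1) → ℝ) (Shat : Matrix (Fin d) (Fin d) ℝ) (σ : ℝ),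
        Shat.PosDef ∧ 0 < σ ∧
        fAdaptedCE d n f X m Shat σ =
          ((d + 1 : ℝ) / 2) * Real.log (2 * π * Real.exp 1) +
            (1 / 2) * Real.log cov.det +
            (1 / 2) * Real.log ((1 / n : ℝ) * ∑ l, (res l - md) ^ 2) := by
  have hn' : (n : ℝ) ≠ 0 := Nat.cast_ne_zero.mpr hn.ne'
  set s : ℝ := (1 / n : ℝ) * ∑ l, (res l - md) ^ 2 with hs
  have hXfun : ∀ l : Fin n, (fun i => X l (Fin.castSucc i)) = Xhat l := fun l => (hXhat l).symm
  have hresfun : ∀ l : Fin n, X l (Fin.last d) - f (Xhat l) = res l := fun l => (hres l).symm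
  have hlog2πe : Real.log (2 * π * Real.exp 1) = Real.log (2 * π) + 1 := by
    rw [Real.log_mul (by positivity) (Real.exp_pos 1).ne', Real.log_exp]
  have hns : ∑ l, (res l - md) ^ 2 = n * s := by rw [hs]; field_simp
  constructor
  · intro m Shat σ hSpd hσ
    rw [lem_CE_formula d n hn f X m Shat σ hSpd hσ]
    simp only [hXfun, hresfun]
    have hq1 : ∑ l, ((Xhat l - mhat) ⬝ᵥ (Shat⁻¹ *ᵥ (Xhat l - mhat))) ≤
        ∑ l, ((Xhat l - fun i => m (Fin.castSucc i)) ⬝ᵥ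
          (Shat⁻¹ *ᵥ (Xhat l - fun i => m (Fin.castSucc i)))) :=
      lem_vec_bias hn hSpd.inv.posSemidef Xhat mhat _ hmhat
    have hq2 : ∑ l, ((Xhat l - mhat) ⬝ᵥ (Shat⁻¹ *ᵥ (Xhat l - mhat))) =
        n * (Shat⁻¹ * cov).trace := lem_sum_q hn Shat⁻¹ Xhat mhat cov hcov
    have hld := lem_logdet hSpd hcovPD
    have hz1 : ∑ l, (res l - md) ^ 2 ≤ ∑ l, (res l - m (Fin.last d)) ^ 2 :=
      lem_scalar_bias res md (m (Fin.last d)) hmd hn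
    have hσs := lem_log_ineq hvar hσ
    have f1 : (1/2) * (Shat⁻¹ * cov).trace ≤ (1/(2*(n:ℝ))) *
        ∑ l, ((Xhat l - fun i => m (Fin.castSucc i)) ⬝ᵥ
          (Shat⁻¹ *ᵥ (Xhat l - fun i => m (Fin.castSucc i)))) := by
      have h0 : (0:ℝ) ≤ (1/(2*(n:ℝ))) *
          ((∑ l, ((Xhat l - fun i => m (Fin.castSucc i)) ⬝ᵥ
            (Shat⁻¹ *ᵥ (Xhat l - fun i => m (Fin.castSucc i))))) -
            n * (Shat⁻¹ * cov).trace) :=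
        mul_nonneg (by positivity) (by linarith)
      have h1 : (1/(2*(n:ℝ))) *
          ((∑ l, ((Xhat l - fun i => m (Fin.castSucc i)) ⬝ᵥ
            (Shat⁻¹ *ᵥ (Xhat l - fun i => m (Fin.castSucc i))))) -
            n * (Shat⁻¹ * cov).trace) =
          (1/(2*(n:ℝ))) * (∑ l, ((Xhat l - fun i => m (Fin.castSucc i)) ⬝ᵥ
            (Shat⁻¹ *ᵥ (Xhat l - fun i => m (Fin.castSucc i))))) -
            (1/2) * (Shat⁻¹ * cov).trace := by
        field_simp
      linarith
    have f2a : s/(2*σ) ≤ (1/(2*σ*(n:ℝ))) * ∑ l, (res l - m (Fin.last d)) ^ 2 := by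
      have h0 : (0:ℝ) ≤ (1/(2*σ*(n:ℝ))) *
          ((∑ l, (res l - m (Fin.last d)) ^ 2) - n * s) :=
        mul_nonneg (by positivity) (by linarith [hz1, hns])
      have h1 : (1/(2*σ*(n:ℝ))) * ((∑ l, (res l - m (Fin.last d)) ^ 2) - n * s) =
          (1/(2*σ*(n:ℝ))) * (∑ l, (res l - m (Fin.last d)) ^ 2) - s/(2*σ) := by
        field_simp
      linarith
    have hhalf : s/(2*σ) = (s/σ)/2 := by ring
    rw [hlog2πe, Real.log_mul (by positivity : (2*π:ℝ) ≠ 0) hσ.ne']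
    linarith [f1, hld, f2a, hσs]
  · refine ⟨Fin.snoc mhat md, cov, s, hcovPD, hvar, ?_⟩
    rw [lem_CE_formula d n hn f X _ cov s hcovPD hvar]
    simp only [hXfun, hresfun, Fin.snoc_castSucc, Fin.snoc_last]
    have hq2 : ∑ l, ((Xhat l - mhat) ⬝ᵥ (cov⁻¹ *ᵥ (Xhat l - mhat))) =
        n * (cov⁻¹ * cov).trace := lem_sum_q hn cov⁻¹ Xhat mhat cov hcov
    have hone : cov⁻¹ * cov = 1 :=
      Matrix.nonsing_inv_mul cov (isUnit_iff_ne_zero.mpr hcovPD.det_pos.ne')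
    rw [hq2, hone, Matrix.trace_one, hns, hlog2πe,
      Real.log_mul (by positivity : (2*π:ℝ) ≠ 0) hvar.ne']
    simp only [Fintype.card_fin]
    field_simp
    ring
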